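/- Under the LATE assumptions and EMCO, for any measurable set A in the support of Y and any d > 0: P(Y ∈ A, D=d | Z=1) ≥ P(Y ∈ A, D=d | Z=0). -/

import Mathlib

open MeasureTheory ProbabilityTheory

variable {Ω : Type*}

/-- probability of a set -/
noncomputable def pr [MeasurableSpace Ω] (μ : MeasureTheory.Measure Ω) (A : Set Ω) : ℝ :=
  (μ A).toReal

/-- conditional probability P(A | B) -/
noncomputable def cP [MeasurableSpace Ω] (μ : MeasureTheory.Measure Ω) (A B : Set Ω) : ℝ :=
  pr μ (A ∩ B) / pr μ B

/-- conditional expectation E[f | B] -/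
noncomputable def cE [MeasurableSpace Ω] (μ : MeasureTheory.Measure Ω) (f : Ω → ℝ) (B : Set Ω) : ℝ :=
  (∫ ω in B, f ω ∂μ) / pr μ B

/-- observed treatment D = Z·D(1) + (1−Z)·D(0) -/
def obsD (Z D0 D1 : Ω → ℕ) : Ω → ℕ := fun ω => if Z ω = 1 then D1 ω else D0 ω

/-- observed outcome Y = Y(D) -/
noncomputable def obsY (Z D0 D1 : Ω → ℕ) (Yp : ℕ → Ω → ℝ) : Ω → ℝ :=
  fun ω => Yp (obsD Z D0 D1 ω) ω

/-- under LATE + EMCO, P(Y ∈ A, D=d | Z=1) ≥ P(Y ∈ A, D=d | Z=0) for d > 0. -/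
theorem emco_joint_density_increases
    [MeasurableSpace Ω] (μ : MeasureTheory.Measure Ω) [IsProbabilityMeasure μ]
    (Dbar : ℕ) (Z D0 D1 : Ω → ℕ) (Yp : ℕ → Ω → ℝ)
    (hZ01 : ∀ ω, Z ω = 0 ∨ Z ω = 1)
    (hZm : Measurable Z) (hD0m : Measurable D0) (hD1m : Measurable D1)
    (hD0b : ∀ ω, D0 ω ≤ Dbar) (hD1b : ∀ ω, D1 ω ≤ Dbar)
    (hYm : ∀ d, Measurable (Yp d))
    (hindep : IndepFun (fun ω => (D0 ω, D1 ω, fun d => Yp d ω)) Z μ)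
    (hmono : ∀ᵐ ω ∂μ, D0 ω ≤ D1 ω)
    (hemco : ∀ᵐ ω ∂μ, D0 ω < D1 ω → D0 ω = 0)
    (hZ1pos : 0 < pr μ {ω | Z ω = 1}) (hZ1lt : pr μ {ω | Z ω = 1} < 1)
    (A : Set ℝ) (hA : MeasurableSet A) (d : ℕ) (hd : 0 < d) :
    cP μ {ω | obsY Z D0 D1 Yp ω ∈ A ∧ obsD Z D0 D1 ω = d} {ω | Z ω = 1} ≥
      cP μ {ω | obsY Z D0 D1 Yp ω ∈ A ∧ obsD Z D0 D1 ω = d} {ω | Z ω = 0} := by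

  classical
  set W : Ω → ℕ × ℕ × (ℕ → ℝ) := fun ω => (D0 ω, D1 ω, fun d => Yp d ω) with hW
  set T1 : Set (ℕ × ℕ × (ℕ → ℝ)) := {p | p.2.2 d ∈ A ∧ p.2.1 = d} with hT1def
  set T0 : Set (ℕ × ℕ × (ℕ → ℝ)) := {p | p.2.2 d ∈ A ∧ p.1 = d} with hT0def
  have heval : Measurable fun p : ℕ × ℕ × (ℕ → ℝ) => p.2.2 d :=
    (measurable_pi_apply d).comp (measurable_snd.comp measurable_snd)
  have hT1m : MeasurableSet T1 := by
    have : T1 = (fun p : ℕ × ℕ × (ℕ → ℝ) => p.2.2 d) ⁻¹' A ∩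
        (fun p : ℕ × ℕ × (ℕ → ℝ) => p.2.1) ⁻¹' {d} := rfl
    rw [this]
    exact (heval hA).inter ((measurable_fst.comp measurable_snd) (measurableSet_singleton d))
  have hT0m : MeasurableSet T0 := by
    have : T0 = (fun p : ℕ × ℕ × (ℕ → ℝ) => p.2.2 d) ⁻¹' A ∩
        (fun p : ℕ × ℕ × (ℕ → ℝ) => p.1) ⁻¹' {d} := rfl
    rw [this]
    exact (heval hA).inter (measurable_fst (measurableSet_singleton d))
  set E : Set Ω := {ω | obsY Z D0 D1 Yp ω ∈ A ∧ obsD Z D0 D1 ω = d} with hE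
  -- set identities
  have hE1 : E ∩ {ω | Z ω = 1} = W ⁻¹' T1 ∩ Z ⁻¹' {1} := by
    ext ω
    simp only [hE, hT1def, hW, Set.mem_inter_iff, Set.mem_setOf_eq, Set.mem_preimage,
      Set.mem_singleton_iff]
    constructor
    · rintro ⟨⟨hy, hdd⟩, hz⟩
      rw [obsD, if_pos hz] at hdd
      refine ⟨⟨?_, hdd⟩, hz⟩
      simpa [obsY, obsD, hz, hdd] using hy
    · rintro ⟨⟨hy, hdd⟩, hz⟩
      exact ⟨⟨by simpa [obsY, obsD, hz, hdd] using hy, by simpa [obsD, hz] using hdd⟩, hz⟩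
  have hE0 : E ∩ {ω | Z ω = 0} = W ⁻¹' T0 ∩ Z ⁻¹' {0} := by
    ext ω
    simp only [hE, hT0def, hW, Set.mem_inter_iff, Set.mem_setOf_eq, Set.mem_preimage,
      Set.mem_singleton_iff]
    constructor
    · rintro ⟨⟨hy, hdd⟩, hz⟩
      have hz' : Z ω ≠ 1 := by omega
      rw [obsD, if_neg hz'] at hdd
      refine ⟨⟨?_, hdd⟩, hz⟩
      simpa [obsY, obsD, hz', hdd] using hy
    · rintro ⟨⟨hy, hdd⟩, hz⟩
      have hz' : Z ω ≠ 1 := by omega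
      exact ⟨⟨by simpa [obsY, obsD, hz', hdd] using hy, by simpa [obsD, hz'] using hdd⟩, hz⟩
  -- independence
  have hind1 : μ (W ⁻¹' T1 ∩ Z ⁻¹' {1}) = μ (W ⁻¹' T1) * μ (Z ⁻¹' {1}) :=
    hindep.measure_inter_preimage_eq_mul T1 {1} hT1m (measurableSet_singleton 1)
  have hind0 : μ (W ⁻¹' T0 ∩ Z ⁻¹' {0}) = μ (W ⁻¹' T0) * μ (Z ⁻¹' {0}) :=
    hindep.measure_inter_preimage_eq_mul T0 {0} hT0m (measurableSet_singleton 0)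
  have hB1 : ({ω | Z ω = 1} : Set Ω) = Z ⁻¹' {1} := rfl
  have hB0 : ({ω | Z ω = 0} : Set Ω) = Z ⁻¹' {0} := rfl
  have hpr1 : pr μ {ω | Z ω = 1} ≠ 0 := ne_of_gt hZ1pos
  have hpr0 : pr μ {ω | Z ω = 0} ≠ 0 := by
    have hcompl : ({ω | Z ω = 0} : Set Ω) = {ω | Z ω = 1}ᶜ := by
      ext ω; simp only [Set.mem_setOf_eq, Set.mem_compl_iff]
      rcases hZ01 ω with h | h <;> simp [h]
    have hm1 : MeasurableSet {ω | Z ω = 1} := hZm (measurableSet_singleton 1)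
    have hlt : μ {ω | Z ω = 1} < 1 := by
      by_contra h
      push_neg at h
      have : μ {ω | Z ω = 1} = 1 := le_antisymm prob_le_one h
      rw [pr, this] at hZ1lt
      simp at hZ1lt
    have : μ {ω | Z ω = 0} = 1 - μ {ω | Z ω = 1} := by
      rw [hcompl, prob_compl_eq_one_sub hm1]
    have hpos : 0 < μ {ω | Z ω = 0} := by
      rw [this]
      exact tsub_pos_of_lt hlt
    rw [pr]
    exact ENNReal.toReal_ne_zero.mpr ⟨ne_of_gt hpos, measure_ne_top μ _⟩
  -- compute conditional probabilities
  have hcP1 : cP μ E {ω | Z ω = 1} = pr μ (W ⁻¹' T1) := by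
    rw [cP, pr, hE1, hind1, ENNReal.toReal_mul]
    rw [hB1] at hpr1 ⊢
    simp only [pr] at hpr1 ⊢
    field_simp
  have hcP0 : cP μ E {ω | Z ω = 0} = pr μ (W ⁻¹' T0) := by
    rw [cP, pr, hE0, hind0, ENNReal.toReal_mul]
    rw [hB0] at hpr0 ⊢
    simp only [pr] at hpr0 ⊢
    field_simp
  rw [hcP1, hcP0]
  -- a.e. inclusion
  have hae : μ (W ⁻¹' T0) ≤ μ (W ⁻¹' T1) := by
    apply measure_mono_ae
    filter_upwards [hmono, hemco] with ω h1 h2 hmem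
    have hmem' : Yp d ω ∈ A ∧ D0 ω = d := hmem
    obtain ⟨hy, hd0⟩ := hmem'
    have hD1 : D1 ω = d := by
      rcases lt_or_eq_of_le h1 with hlt | heq
      · exact absurd (h2 hlt) (by omega)
      · omega
    exact (⟨hy, hD1⟩ : Yp d ω ∈ A ∧ D1 ω = d)
  exact ENNReal.toReal_le_toReal (measure_ne_top μ _) (measure_ne_top μ _) |>.mpr hae
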